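/- Let P₁ and P₂ be probability measures on a measurable space with total variation distance V. Then inf_Q ( χ²(P₁||Q) + χ²(P₂||Q) ) ≥ 2V², where the infimum is over all probability measures Q. -/

import Mathlib

open MeasureTheory Real
open scoped ENNReal NNReal

/-- The chi-squared divergence `χ²(P‖Q) = ∫ (dP/dQ)² dQ - 1` (real-valued; meaningful when
`P ≪ Q` and the integrand is integrable, in which case it agrees with the usual definition;
otherwise the usual `χ²` is `+∞` and the bound is trivially true). -/
noncomputable def chiSqDivR {X : Type*} [MeasurableSpace X] (P Q : Measure X) : ℝ :=
  ∫ x, (((P.rnDeriv Q x).toReal) ^ 2 - 1) ∂Q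

open ProbabilityTheory in
lemma sq_integral_le {X : Type*} [MeasurableSpace X] (Q : Measure X) [IsProbabilityMeasure Q]
    (g : X → ℝ) (hg : MemLp g 2 Q) : (∫ x, g x ∂Q) ^ 2 ≤ ∫ x, (g x) ^ 2 ∂Q := by
  have h := variance_nonneg g Q
  rw [variance_eq_sub hg] at h
  simpa using sub_nonneg.mp h

/-- inequality (9): for probability measures `P₁, P₂` with total variation
distance `V`, `inf_Q (χ²(P₁‖Q) + χ²(P₂‖Q)) ≥ 2V²`; the infimum over `Q` is expressed by
universally quantifying over probability measures `Q`. -/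
theorem statement9 {X : Type*} [MeasurableSpace X] (μ : Measure X) [SigmaFinite μ]
    (p₁ p₂ : X → ℝ) (h₁m : Measurable p₁) (h₂m : Measurable p₂)
    (h₁0 : ∀ x, 0 ≤ p₁ x) (h₂0 : ∀ x, 0 ≤ p₂ x)
    (P₁ P₂ : Measure X)
    (hP₁ : P₁ = μ.withDensity fun x => ENNReal.ofReal (p₁ x))
    (hP₂ : P₂ = μ.withDensity fun x => ENNReal.ofReal (p₂ x))
    [IsProbabilityMeasure P₁] [IsProbabilityMeasure P₂]
    (V : ℝ) (hV : V = 2⁻¹ * ∫ x, |p₁ x - p₂ x| ∂μ)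
    (Q : Measure X) [IsProbabilityMeasure Q] (h₁Q : P₁ ≪ Q) (h₂Q : P₂ ≪ Q)
    (hi₁ : Integrable (fun x => (P₁.rnDeriv Q x).toReal ^ 2) Q)
    (hi₂ : Integrable (fun x => (P₂.rnDeriv Q x).toReal ^ 2) Q) :
    2 * V ^ 2 ≤ chiSqDivR P₁ Q + chiSqDivR P₂ Q := by
  set f₁ : X → ℝ := fun x => (P₁.rnDeriv Q x).toReal with hf₁
  set f₂ : X → ℝ := fun x => (P₂.rnDeriv Q x).toReal with hf₂
  -- basic integrability and measurability
  have hm₁ : AEStronglyMeasurable f₁ Q :=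
    (Measure.measurable_rnDeriv P₁ Q).ennreal_toReal.aestronglyMeasurable
  have hm₂ : AEStronglyMeasurable f₂ Q :=
    (Measure.measurable_rnDeriv P₂ Q).ennreal_toReal.aestronglyMeasurable
  have hL₁ : MemLp f₁ 2 Q := (memLp_two_iff_integrable_sq hm₁).2 hi₁
  have hL₂ : MemLp f₂ 2 Q := (memLp_two_iff_integrable_sq hm₂).2 hi₂
  have hf₁i : Integrable f₁ Q := Measure.integrable_toReal_rnDeriv
  have hf₂i : Integrable f₂ Q := Measure.integrable_toReal_rnDeriv
  have hIf₁ : ∫ x, f₁ x ∂Q = 1 := by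
    rw [Measure.integral_toReal_rnDeriv h₁Q]; simp
  have hIf₂ : ∫ x, f₂ x ∂Q = 1 := by
    rw [Measure.integral_toReal_rnDeriv h₂Q]; simp
  -- integrability of p₁, p₂ w.r.t. μ
  have hp₁i : Integrable p₁ μ := by
    refine ⟨h₁m.aestronglyMeasurable, ?_⟩
    rw [hasFiniteIntegral_iff_norm]
    have : ∀ x, ENNReal.ofReal ‖p₁ x‖ = ENNReal.ofReal (p₁ x) := fun x => by
      rw [Real.norm_eq_abs, abs_of_nonneg (h₁0 x)]
    simp_rw [this]
    have := hP₁ ▸ (measure_univ (μ := P₁))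
    rw [withDensity_apply _ MeasurableSet.univ] at this
    simp only [Measure.restrict_univ] at this
    simp [this]
  have hp₂i : Integrable p₂ μ := by
    refine ⟨h₂m.aestronglyMeasurable, ?_⟩
    rw [hasFiniteIntegral_iff_norm]
    have : ∀ x, ENNReal.ofReal ‖p₂ x‖ = ENNReal.ofReal (p₂ x) := fun x => by
      rw [Real.norm_eq_abs, abs_of_nonneg (h₂0 x)]
    simp_rw [this]
    have := hP₂ ▸ (measure_univ (μ := P₂))
    rw [withDensity_apply _ MeasurableSet.univ] at this
    simp only [Measure.restrict_univ] at this
    simp [this]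
  -- P_i(s).toReal = ∫_s p_i dμ
  have hPs : ∀ (p : X → ℝ), Measurable p → (∀ x, 0 ≤ p x) → Integrable p μ →
      ∀ s : Set X, MeasurableSet s →
      ((μ.withDensity fun x => ENNReal.ofReal (p x)) s).toReal = ∫ x in s, p x ∂μ := by
    intro p hpm hp0 hpi s hs
    rw [withDensity_apply _ hs,
      ← ofReal_integral_eq_lintegral_ofReal (hpi.restrict) (Filter.Eventually.of_forall hp0),
      ENNReal.toReal_ofReal (integral_nonneg fun x => hp0 x)]
  -- The set A = {p₂ ≤ p₁}
  set A : Set X := {x | p₂ x ≤ p₁ x} with hA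
  have hAm : MeasurableSet A := measurableSet_le h₂m h₁m
  have hAcm : MeasurableSet Aᶜ := hAm.compl
  -- 2V = (P₁ A - P₂ A) + (P₂ Aᶜ - P₁ Aᶜ)
  have habs_i : Integrable (fun x => |p₁ x - p₂ x|) μ := (hp₁i.sub hp₂i).abs
  have h2V : 2 * V = ((P₁ A).toReal - (P₂ A).toReal) + ((P₂ Aᶜ).toReal - (P₁ Aᶜ).toReal) := by
    have hsplit : ∫ x, |p₁ x - p₂ x| ∂μ
        = (∫ x in A, |p₁ x - p₂ x| ∂μ) + ∫ x in Aᶜ, |p₁ x - p₂ x| ∂μ :=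
      (integral_add_compl hAm habs_i).symm
    have hA1 : ∫ x in A, |p₁ x - p₂ x| ∂μ = (∫ x in A, p₁ x ∂μ) - ∫ x in A, p₂ x ∂μ := by
      rw [← integral_sub hp₁i.restrict hp₂i.restrict]
      refine setIntegral_congr_fun hAm fun x hx => ?_
      exact abs_of_nonneg (sub_nonneg.mpr hx)
    have hA2 : ∫ x in Aᶜ, |p₁ x - p₂ x| ∂μ = (∫ x in Aᶜ, p₂ x ∂μ) - ∫ x in Aᶜ, p₁ x ∂μ := by
      rw [← integral_sub hp₂i.restrict hp₁i.restrict]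
      refine setIntegral_congr_fun hAcm fun x hx => ?_
      have hx' : p₁ x < p₂ x := by simpa [A] using hx
      rw [abs_of_nonpos (by linarith), neg_sub]
    rw [hV, hP₁, hP₂, hPs p₁ h₁m h₁0 hp₁i A hAm, hPs p₂ h₂m h₂0 hp₂i A hAm,
      hPs p₁ h₁m h₁0 hp₁i Aᶜ hAcm, hPs p₂ h₂m h₂0 hp₂i Aᶜ hAcm]
    rw [hsplit, hA1, hA2]; ring
  -- ∫ |f₁ - f₂| dQ ≥ 2V
  have hdiff_i : Integrable (fun x => |f₁ x - f₂ x|) Q := (hf₁i.sub hf₂i).abs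
  have ht : 2 * V ≤ ∫ x, |f₁ x - f₂ x| ∂Q := by
    have hsplit : ∫ x, |f₁ x - f₂ x| ∂Q
        = (∫ x in A, |f₁ x - f₂ x| ∂Q) + ∫ x in Aᶜ, |f₁ x - f₂ x| ∂Q :=
      (integral_add_compl hAm hdiff_i).symm
    have hA1 : (∫ x in A, f₁ x ∂Q) - ∫ x in A, f₂ x ∂Q ≤ ∫ x in A, |f₁ x - f₂ x| ∂Q := by
      rw [← integral_sub hf₁i.restrict hf₂i.restrict]
      exact integral_mono ((hf₁i.sub hf₂i).restrict) (((hf₁i.sub hf₂i).restrict).abs)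
        fun x => le_abs_self _
    have hA2 : (∫ x in Aᶜ, f₂ x ∂Q) - ∫ x in Aᶜ, f₁ x ∂Q ≤ ∫ x in Aᶜ, |f₁ x - f₂ x| ∂Q := by
      rw [← integral_sub hf₂i.restrict hf₁i.restrict]
      refine integral_mono ((hf₂i.sub hf₁i).restrict) (((hf₁i.sub hf₂i).restrict).abs)
        fun x => ?_
      rw [abs_sub_comm]; exact le_abs_self _
    have e1 : ∫ x in A, f₁ x ∂Q = (P₁ A).toReal := Measure.setIntegral_toReal_rnDeriv h₁Q A
    have e2 : ∫ x in A, f₂ x ∂Q = (P₂ A).toReal := Measure.setIntegral_toReal_rnDeriv h₂Q A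
    have e3 : ∫ x in Aᶜ, f₁ x ∂Q = (P₁ Aᶜ).toReal := Measure.setIntegral_toReal_rnDeriv h₁Q Aᶜ
    have e4 : ∫ x in Aᶜ, f₂ x ∂Q = (P₂ Aᶜ).toReal := Measure.setIntegral_toReal_rnDeriv h₂Q Aᶜ
    rw [hsplit, h2V]
    have := add_le_add hA1 hA2
    rw [e1, e2, e3, e4] at this
    linarith
  have hVnn : 0 ≤ V := by
    rw [hV]
    positivity
  -- Cauchy–Schwarz steps
  have hSum : MemLp (fun x => f₁ x + f₂ x) 2 Q := hL₁.add hL₂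
  have hDiff : MemLp (fun x => |f₁ x - f₂ x|) 2 Q := (hL₁.sub hL₂).abs
  have hcs1 : (4 : ℝ) ≤ ∫ x, (f₁ x + f₂ x) ^ 2 ∂Q := by
    have := sq_integral_le Q _ hSum
    rw [integral_add hf₁i hf₂i, hIf₁, hIf₂] at this
    linarith
  have hcs2 : 4 * V ^ 2 ≤ ∫ x, (f₁ x - f₂ x) ^ 2 ∂Q := by
    have h := sq_integral_le Q _ hDiff
    simp_rw [sq_abs] at h
    calc 4 * V ^ 2 = (2 * V) ^ 2 := by ring
      _ ≤ (∫ x, |f₁ x - f₂ x| ∂Q) ^ 2 := by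
          exact pow_le_pow_left₀ (by linarith) ht 2
      _ ≤ _ := h
  -- combine
  have hsum_i : Integrable (fun x => (f₁ x + f₂ x) ^ 2) Q :=
    (memLp_two_iff_integrable_sq hSum.aestronglyMeasurable).1 hSum
  have hdiff2_i : Integrable (fun x => (f₁ x - f₂ x) ^ 2) Q := by
    have := (memLp_two_iff_integrable_sq hDiff.aestronglyMeasurable).1 hDiff
    simpa [sq_abs] using this
  have hkey : (∫ x, (f₁ x + f₂ x) ^ 2 ∂Q) + (∫ x, (f₁ x - f₂ x) ^ 2 ∂Q)
      = 2 * ((∫ x, f₁ x ^ 2 ∂Q) + ∫ x, f₂ x ^ 2 ∂Q) := by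
    rw [← integral_add hsum_i hdiff2_i, ← integral_add hi₁ hi₂,
      ← MeasureTheory.integral_const_mul]
    refine integral_congr_ae (Filter.Eventually.of_forall fun x => ?_)
    show (f₁ x + f₂ x) ^ 2 + (f₁ x - f₂ x) ^ 2 = 2 * (f₁ x ^ 2 + f₂ x ^ 2)
    ring
  have hchi : chiSqDivR P₁ Q + chiSqDivR P₂ Q
      = (∫ x, f₁ x ^ 2 ∂Q) + (∫ x, f₂ x ^ 2 ∂Q) - 2 := by
    unfold chiSqDivR
    rw [integral_sub hi₁ (integrable_const 1), integral_sub hi₂ (integrable_const 1)]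
    simp
    ring
  rw [hchi]
  linarith
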